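/- arXiv:1810.08001 — 2 statements merged into one kernel-verified Lean document; each statement's English description precedes it below -/
import Mathlib

section
/- Let q ∈ (0,1) with q + q^{-1} = N ≥ 3, and define the quantum factorial [n]_q! = [n]_q [n-1]_q ⋯ [1]_q. For integers a > b ≥ 1, there is a constant C (depending on a, b) such that |[a]_q! / ([b]_q! [a-b]_q! N^{b(a-b)}) - 1| ≤ C/N² for all N ≥ 3. -/
/-- Quantum integer `[k]_q = (q^{-k} - q^k)/(q^{-1} - q)`. -/
noncomputable def qint (q : ℝ) (k : ℕ) : ℝ := (q⁻¹ ^ k - q ^ k) / (q⁻¹ - q)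

/-- Quantum factorial `[n]_q! = [n]_q [n-1]_q ⋯ [1]_q`. -/
noncomputable def qfact (q : ℝ) (n : ℕ) : ℝ := ∏ j ∈ Finset.range n, qint q (j + 1)

/-- The quantum parameter `q = (2/N)/(1 + √(1-4/N²))`, the solution of `q + q⁻¹ = N` in `(0,1)`. -/
noncomputable def qpar (N : ℝ) : ℝ := (2 / N) / (1 + Real.sqrt (1 - 4 / N ^ 2))

lemma qpar_spec (N : ℝ) (hN : 3 ≤ N) :
    0 < qpar N ∧ qpar N ≤ 2 / N ∧ qpar N ≤ 1/2 ∧ qpar N * N = 1 + (qpar N)^2 := by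
  have hN0 : (0:ℝ) < N := by linarith
  have hnn : (0:ℝ) ≤ 1 - 4 / N ^ 2 := by
    have : 4 / N ^ 2 ≤ 4 / 9 := by
      apply div_le_div_of_nonneg_left (by norm_num) (by norm_num)
      nlinarith
    linarith
  obtain ⟨s, hs0, hs2, hq⟩ : ∃ s : ℝ, 0 ≤ s ∧ s ^ 2 = 1 - 4 / N ^ 2 ∧
      qpar N = 2 / N / (1 + s) :=
    ⟨Real.sqrt (1 - 4 / N ^ 2), Real.sqrt_nonneg _, Real.sq_sqrt hnn, rfl⟩
  have hden : (0:ℝ) < 1 + s := by linarith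
  have hq0 : 0 < qpar N := by
    rw [hq]; exact div_pos (by positivity) hden
  have hle : qpar N ≤ 2 / N := by
    rw [hq, div_le_iff₀ hden]
    nlinarith [div_pos (by norm_num : (0:ℝ) < 2) hN0]
  have hkey : qpar N * N = 1 + (qpar N)^2 := by
    have h4 : N^2 * s^2 = N^2 - 4 := by
      rw [hs2]; field_simp
    rw [hq]
    field_simp
    linear_combination (-1) * h4
  have hhalf : qpar N ≤ 1/2 := by
    have h23 : qpar N ≤ 2/3 := le_trans hle (by
      rw [div_le_div_iff₀ hN0 (by norm_num)]; linarith)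
    nlinarith [hq0, hkey]
  exact ⟨hq0, hle, hhalf, hkey⟩

lemma qinv_gt (q : ℝ) (hq0 : 0 < q) (hq1 : q < 1) : q < q⁻¹ := by
  have : 1 < q⁻¹ := (one_lt_inv₀ hq0).mpr hq1
  linarith

lemma qint_pos (q : ℝ) (hq0 : 0 < q) (hq1 : q < 1) (k : ℕ) (hk : 1 ≤ k) :
    0 < qint q k := by
  have h1 : q < q⁻¹ := qinv_gt q hq0 hq1
  apply div_pos _ (by linarith)
  have := pow_lt_pow_left₀ h1 (le_of_lt hq0) (by omega : k ≠ 0)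
  linarith

lemma qint_eq (q : ℝ) (hq0 : 0 < q) (hq1 : q < 1) (k : ℕ) :
    qint q (k + 1) = (1 - (q^2) ^ (k+1)) / (q ^ k * (1 - q^2)) := by
  have hqne : q ≠ 0 := ne_of_gt hq0
  have h2 : 1 - q^2 ≠ 0 := by nlinarith
  have hd1 : q⁻¹ - q ≠ 0 := sub_ne_zero.mpr (ne_of_gt (qinv_gt q hq0 hq1))
  have hd2 : q ^ k * (1 - q^2) ≠ 0 := mul_ne_zero (pow_ne_zero _ hqne) h2
  rw [qint, inv_pow, div_eq_div_iff hd1 hd2]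
  field_simp
  ring

lemma xpow_lt_one (q : ℝ) (hq0 : 0 < q) (hq1 : q < 1) (k : ℕ) : (q^2)^(k+1) < 1 := by
  have hx1 : q^2 < 1 := by nlinarith
  exact pow_lt_one₀ (by positivity) hx1 (by omega)

lemma factor_eq (q N : ℝ) (hq0 : 0 < q) (hq1 : q < 1) (hN : q * N = 1 + q^2) (b j : ℕ) :
    qint q (b+j+1) / (qint q (j+1) * N ^ b)
      = (1 - (q^2)^(b+j+1)) / ((1 - (q^2)^(j+1)) * (1+q^2)^b) := by
  have hqne : q ≠ 0 := ne_of_gt hq0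
  have h2 : 1 - q^2 ≠ 0 := by nlinarith
  have hNval : N = (1 + q^2)/q := by field_simp at hN ⊢; linarith
  have h3 : 1 - (q^2)^(j+1) ≠ 0 := ne_of_gt (by linarith [xpow_lt_one q hq0 hq1 j])
  have h4 : (1 + q^2) ≠ 0 := by nlinarith
  have hbj : b + j + 1 = (b + j) + 1 := rfl
  rw [hbj, qint_eq q hq0 hq1 (b+j), qint_eq q hq0 hq1 j, hNval, div_pow]
  rw [div_eq_div_iff]
  · field_simp
    ring_nf
  · exact mul_ne_zero (div_ne_zero h3 (mul_ne_zero (pow_ne_zero _ hqne) h2))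
      (div_ne_zero (pow_ne_zero _ h4) (pow_ne_zero _ hqne))
  · exact mul_ne_zero h3 (pow_ne_zero _ h4)

lemma pow_upper (x : ℝ) (hx0 : 0 ≤ x) (hx : x ≤ 1/4) :
    ∀ m : ℕ, (1+x)^m ≤ 1 + m * (5/4)^m * x := by
  intro m
  induction m with
  | zero => simp
  | succ m ih =>
    have hcp : (0:ℝ) ≤ (5/4:ℝ)^m := by positivity
    have hc : (1:ℝ) ≤ (5/4:ℝ)^m := one_le_pow₀ (by norm_num)
    have hm0 : (0:ℝ) ≤ (m:ℝ) := Nat.cast_nonneg m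
    have h2 : (1+x)^(m+1) ≤ (1 + m*(5/4)^m*x) * (1+x) := by
      rw [pow_succ]
      apply mul_le_mul_of_nonneg_right ih (by linarith)
    have h3 : (1 + (m:ℝ)*(5/4)^m*x) * (1+x) ≤ 1 + ((m:ℝ)+1) * ((5/4)*(5/4)^m) * x := by
      nlinarith [mul_nonneg (mul_nonneg hm0 hcp) hx0, mul_nonneg hcp hx0,
        mul_nonneg (mul_nonneg (mul_nonneg hm0 hcp) hx0) hx0]
    calc (1+x)^(m+1) ≤ (1 + (m:ℝ)*(5/4)^m*x) * (1+x) := h2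
      _ ≤ 1 + ((m:ℝ)+1) * ((5/4)*(5/4)^m) * x := h3
      _ = 1 + ((m+1 : ℕ):ℝ) * (5/4)^(m+1) * x := by push_cast; ring

/-- Bounds on a single closed-form factor. -/
lemma factor_bounds (x : ℝ) (hx0 : 0 < x) (hx : x ≤ 1/4) (b j : ℕ) :
    (1-x)/(1+x)^b ≤ (1 - x^(b+j+1)) / ((1 - x^(j+1)) * (1+x)^b) ∧
    (1 - x^(b+j+1)) / ((1 - x^(j+1)) * (1+x)^b) ≤ 1/(1-x) := by
  have hx1 : x < 1 := by linarith
  have hxj : x^(j+1) ≤ x := by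
    calc x^(j+1) ≤ x^1 := pow_le_pow_of_le_one (le_of_lt hx0) (le_of_lt hx1) (by omega)
    _ = x := pow_one x
  have hxbj : x^(b+j+1) ≤ x := by
    calc x^(b+j+1) ≤ x^1 := pow_le_pow_of_le_one (le_of_lt hx0) (le_of_lt hx1) (by omega)
    _ = x := pow_one x
  have hxjpos : 0 < x^(j+1) := by positivity
  have hxbjpos : 0 < x^(b+j+1) := by positivity
  have hb1 : (1:ℝ) ≤ (1+x)^b := one_le_pow₀ (by linarith)
  have hbpos : (0:ℝ) < (1+x)^b := by positivity
  constructor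
  · apply div_le_div₀ (by linarith) (by linarith)
      (mul_pos (by linarith) hbpos)
    calc (1 - x^(j+1)) * (1+x)^b ≤ 1 * (1+x)^b := by
          apply mul_le_mul_of_nonneg_right (by linarith) (le_of_lt hbpos)
      _ = (1+x)^b := one_mul _
  · apply div_le_div₀ (by linarith) (by linarith) (by linarith)
    calc (1-x) = (1-x) * 1 := (mul_one _).symm
      _ ≤ (1 - x^(j+1)) * (1+x)^b := by
          apply mul_le_mul (by linarith) hb1 zero_le_one (by linarith)

theorem stmt_4 (a b : ℕ) (hb : 1 ≤ b) (hab : b < a) :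
    ∃ C : ℝ, ∀ N : ℕ, 3 ≤ N →
      |qfact (qpar N) a /
          (qfact (qpar N) b * qfact (qpar N) (a - b) * (N : ℝ) ^ (b * (a - b))) - 1|
        ≤ C / (N : ℝ) ^ 2 := by
  set k := a - b with hk
  clear_value k
  obtain ⟨A, hA⟩ : ∃ A : ℝ, A = k * (4/3)^k := ⟨_, rfl⟩
  obtain ⟨M, hM⟩ : ∃ M : ℝ, M = ((b*k : ℕ) : ℝ) * (5/4)^(b*k) := ⟨_, rfl⟩
  obtain ⟨C0, hC0⟩ : ∃ C0 : ℝ, C0 = max A ((k:ℝ) + M) := ⟨_, rfl⟩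
  have hA0 : 0 ≤ A := by rw [hA]; positivity
  have hM0 : 0 ≤ M := by rw [hM]; positivity
  have hC00 : 0 ≤ C0 := le_trans hA0 (hC0 ▸ le_max_left _ _)
  refine ⟨4 * C0, ?_⟩
  intro N hN3
  have hNR : (3:ℝ) ≤ (N:ℝ) := by exact_mod_cast hN3
  have hN0 : (0:ℝ) < (N:ℝ) := by linarith
  obtain ⟨hq0, hq2N, hqhalf, hqN⟩ := qpar_spec (N:ℝ) hNR
  set q := qpar (N:ℝ) with hqdef
  clear_value q
  have hq1 : q < 1 := lt_of_le_of_lt hqhalf (by norm_num)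
  obtain ⟨x, hxdef⟩ : ∃ x : ℝ, x = q^2 := ⟨_, rfl⟩
  have hx0 : 0 < x := by rw [hxdef]; positivity
  have hx4 : x ≤ 1/4 := by rw [hxdef]; nlinarith
  have hx1 : x < 1 := by linarith
  have hxN : x ≤ 4 / (N:ℝ)^2 := by
    have h1 : q^2 ≤ (2/(N:ℝ))^2 := by nlinarith [div_pos (by norm_num : (0:ℝ) < 2) hN0]
    rw [hxdef]
    calc q^2 ≤ (2/(N:ℝ))^2 := h1
      _ = 4/(N:ℝ)^2 := by rw [div_pow]; norm_num
  -- product decomposition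
  have hba : a = b + k := by omega
  have hqfb_pos : 0 < qfact q b := by
    rw [qfact]; exact Finset.prod_pos (fun i _ => qint_pos q hq0 hq1 _ (by omega))
  have h1 : qfact q a = qfact q b * ∏ j ∈ Finset.range k, qint q (b+j+1) := by
    rw [qfact, qfact, hba, Finset.prod_range_add]
  have h2 : ∏ j ∈ Finset.range k, (qint q (b+j+1) / (qint q (j+1) * (N:ℝ)^b))
      = (∏ j ∈ Finset.range k, qint q (b+j+1)) / (qfact q k * (N:ℝ)^(b*k)) := by
    rw [Finset.prod_div_distrib, Finset.prod_mul_distrib, Finset.prod_const,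
      Finset.card_range, ← pow_mul, qfact]
  have hR : qfact q a / (qfact q b * qfact q k * (N:ℝ)^(b*k))
      = ∏ j ∈ Finset.range k, (qint q (b+j+1) / (qint q (j+1) * (N:ℝ)^b)) := by
    rw [h2, h1, mul_assoc, mul_div_mul_left _ _ (ne_of_gt hqfb_pos)]
  set R := qfact q a / (qfact q b * qfact q k * (N:ℝ)^(b*k)) with hRdef
  clear_value R
  -- rewrite factors in closed form
  have hfac : ∀ j, qint q (b+j+1) / (qint q (j+1) * (N:ℝ)^b)
      = (1 - x^(b+j+1)) / ((1 - x^(j+1)) * (1+x)^b) := by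
    intro j
    rw [hxdef]
    exact factor_eq q (N:ℝ) hq0 hq1 hqN b j
  -- bounds on R
  have hlow : ((1-x)/(1+x)^b)^k ≤ R := by
    rw [hR]
    calc ((1-x)/(1+x)^b)^k
        = ∏ _j ∈ Finset.range k, ((1-x)/(1+x)^b) := by
          rw [Finset.prod_const, Finset.card_range]
      _ ≤ ∏ j ∈ Finset.range k, (qint q (b+j+1) / (qint q (j+1) * (N:ℝ)^b)) := by
          apply Finset.prod_le_prod
          · intro i _
            have hbpos : (0:ℝ) < (1+x)^b := by positivity
            apply div_nonneg (by linarith) (le_of_lt hbpos)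
          · intro i _
            rw [hfac i]
            exact (factor_bounds x hx0 hx4 b i).1
  have hupp : R ≤ (1/(1-x))^k := by
    rw [hR]
    calc ∏ j ∈ Finset.range k, (qint q (b+j+1) / (qint q (j+1) * (N:ℝ)^b))
        ≤ ∏ _j ∈ Finset.range k, (1/(1-x)) := by
          apply Finset.prod_le_prod
          · intro i _
            rw [hfac i]
            have h1x : (0:ℝ) < 1 - x^(i+1) := by
              have := xpow_lt_one q hq0 hq1 i
              rw [← hxdef] at this; linarith
            have hxbi : x^(b+i+1) ≤ 1 := le_of_lt (by
              have := xpow_lt_one q hq0 hq1 (b+i)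
              rw [← hxdef] at this; exact this)
            have hbpos : (0:ℝ) < (1+x)^b := by positivity
            apply div_nonneg (by linarith) (le_of_lt (mul_pos h1x hbpos))
          · intro i _
            rw [hfac i]
            exact (factor_bounds x hx0 hx4 b i).2
      _ = (1/(1-x))^k := by rw [Finset.prod_const, Finset.card_range]
  -- analytic estimates
  have hbern : 1 - (k:ℝ)*x ≤ (1-x)^k := by
    have h := one_add_mul_le_pow (by linarith : (-2:ℝ) ≤ -x) k
    have he : ((1:ℝ) + -x)^k = (1-x)^k := by ring_nf
    rw [he] at h
    linarith [h]
  have h34 : ((3:ℝ)/4)^k ≤ (1-x)^k := by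
    apply pow_le_pow_left₀ (by norm_num) (by linarith)
  have h34pos : (0:ℝ) < ((3:ℝ)/4)^k := by positivity
  have h43id : ((4:ℝ)/3)^k * ((3:ℝ)/4)^k = 1 := by
    rw [← mul_pow]; norm_num
  -- upper: R ≤ 1 + A x
  have hup2 : R ≤ 1 + A * x := by
    have hpk : (0:ℝ) < (1-x)^k := lt_of_lt_of_le h34pos h34
    have h5 : ((1:ℝ)/(1-x))^k = 1/(1-x)^k := by rw [div_pow]; norm_num
    have h7 : A * ((3:ℝ)/4)^k = (k:ℝ) := by
      rw [hA, mul_assoc, h43id, mul_one]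
    have h6 : 1/(1-x)^k ≤ 1 + A*x := by
      rw [div_le_iff₀ hpk]
      have h8 : A*x*((3:ℝ)/4)^k ≤ A*x*(1-x)^k :=
        mul_le_mul_of_nonneg_left h34 (mul_nonneg hA0 (le_of_lt hx0))
      have h9 : A*x*((3:ℝ)/4)^k = (k:ℝ)*x := by
        rw [mul_comm A x, mul_assoc, h7]; ring
      have h10 : (1+A*x)*(1-x)^k = (1-x)^k + A*x*(1-x)^k := by ring
      linarith [h8, h9, hbern, h10]
    calc R ≤ (1/(1-x))^k := hupp
      _ = 1/(1-x)^k := h5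
      _ ≤ 1 + A*x := h6
  -- lower: 1 - (k+M) x ≤ R
  have hlo2 : 1 - ((k:ℝ) + M) * x ≤ R := by
    have hppos : (0:ℝ) < (1+x)^(b*k) := by positivity
    have hpu : (1+x)^(b*k) ≤ 1 + M*x := by
      rw [hM]; exact pow_upper x (le_of_lt hx0) hx4 (b*k)
    have hlb2 : ((1-x)/(1+x)^b)^k = (1-x)^k / (1+x)^(b*k) := by
      rw [div_pow, ← pow_mul]
    have h8 : 1 - ((k:ℝ)+M)*x ≤ (1-x)^k / (1+x)^(b*k) := by
      rw [le_div_iff₀ hppos]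
      rcases le_or_gt 0 (1 - ((k:ℝ)+M)*x) with hc | hc
      · calc (1 - ((k:ℝ)+M)*x) * (1+x)^(b*k) ≤ (1 - ((k:ℝ)+M)*x) * (1 + M*x) :=
              mul_le_mul_of_nonneg_left hpu hc
          _ ≤ 1 - (k:ℝ)*x := by
              have hexp : (1 - ((k:ℝ)+M)*x)*(1+M*x)
                  = 1 - (k:ℝ)*x - ((k:ℝ)+M)*M*(x*x) := by ring
              have hnn : (0:ℝ) ≤ ((k:ℝ)+M)*M*(x*x) :=
                mul_nonneg (mul_nonneg (add_nonneg (Nat.cast_nonneg k) hM0) hM0)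
                  (mul_nonneg (le_of_lt hx0) (le_of_lt hx0))
              linarith [hexp, hnn]
          _ ≤ (1-x)^k := hbern
      · have h9 : (1:ℝ) ≤ (1+x)^(b*k) := one_le_pow₀ (by linarith)
        have h10 : (0:ℝ) ≤ (1-x)^k := pow_nonneg (by linarith) k
        have h11 := mul_le_mul_of_nonpos_left h9 (le_of_lt hc)
        have h12 : (1 - ((k:ℝ)+M)*x) * 1 = 1 - ((k:ℝ)+M)*x := mul_one _
        linarith [h11, h12, h10, hc]
    calc 1 - ((k:ℝ)+M)*x ≤ (1-x)^k / (1+x)^(b*k) := h8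
      _ = ((1-x)/(1+x)^b)^k := hlb2.symm
      _ ≤ R := hlow
  -- combine
  have habs : |R - 1| ≤ C0 * x := by
    rw [abs_le]
    constructor
    · have h : (k:ℝ) + M ≤ C0 := hC0 ▸ le_max_right _ _
      have h2 := mul_le_mul_of_nonneg_right h (le_of_lt hx0)
      linarith [hlo2, h2]
    · have h : A ≤ C0 := hC0 ▸ le_max_left _ _
      have h2 := mul_le_mul_of_nonneg_right h (le_of_lt hx0)
      linarith [hup2, h2]
  calc |R - 1| ≤ C0 * x := habs
    _ ≤ C0 * (4/(N:ℝ)^2) := mul_le_mul_of_nonneg_left hxN hC00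
    _ = 4 * C0 / (N:ℝ)^2 := by ring
end

section
/- Define highest-weight Clebsch-Gordan coefficients C^{l,m,l+m}_{j₁,j₂,j} = δ_{j₁+j₂,j} √(l! m! / (l+m)!) · √(j! (l+m-j)! / (j₁! j₂! (l-j₁)! (m-j₂)!)) for 0 ≤ j₁ ≤ l, 0 ≤ j₂ ≤ m, 0 ≤ j ≤ l+m. Then for all valid i, j, s₂ (with l ≥ m): Σ_{i₂} C^{l,m,l+m}_{i-i₂,i₂,i} C^{l,m,l+m}_{j-i₂,i₂,j} C^{l-m,m,l}_{i-i₂-s₂,s₂,i-i₂} C^{l-m,m,l}_{i-i₂-s₂,s₂+j-i,j-i₂} = C^{l,m,l+m}_{i-s₂,s₂,i} C^{l,m,l+m}_{i-s₂,s₂+j-i,j}, where i₂ ranges over max{0, i-s₂-l+m} ≤ i₂ ≤ min{m, i-s₂}. -/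
/-- Highest-weight Clebsch-Gordan coefficient `C^{l,m,l+m}_{j₁,j₂,j}`, given by the explicit
factorial formula, and set to `0` outside the allowed index range (in particular when a
factorial argument would be negative). -/
noncomputable def CGhw (l m : ℕ) (j₁ j₂ j : ℤ) : ℝ :=
  if j₁ + j₂ = j ∧ 0 ≤ j₁ ∧ j₁ ≤ (l : ℤ) ∧ 0 ≤ j₂ ∧ j₂ ≤ (m : ℤ) then
    Real.sqrt ((l.factorial * m.factorial : ℝ) / (l + m).factorial) *
      Real.sqrt ((j.toNat.factorial * ((l + m : ℤ) - j).toNat.factorial : ℝ) /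
        (j₁.toNat.factorial * j₂.toNat.factorial * ((l : ℤ) - j₁).toNat.factorial *
          ((m : ℤ) - j₂).toNat.factorial))
  else 0

private lemma vdm (a b k : ℕ) :
    ∑ n ∈ Finset.range (k + 1), a.choose n * b.choose (k - n) = (a + b).choose k := by
  rw [Nat.add_choose_eq, Finset.Nat.sum_antidiagonal_eq_sum_range_succ_mk]

private lemma sq_cancel {x y : ℝ} (hx : 0 ≤ x) (hy : 0 ≤ y) (h : x ^ 2 = y ^ 2) : x = y := by
  nlinarith [sq_nonneg (x - y), sq_nonneg (x + y)]


theorem stmt_14 (l m : ℕ) (hlm : m ≤ l) (i j s₂ : ℤ)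
    (hi0 : 0 ≤ i) (hi1 : i ≤ (l : ℤ) + m) (hj0 : 0 ≤ j) (hj1 : j ≤ (l : ℤ) + m)
    (hs1 : max 0 (i - j) ≤ s₂) (hs2 : s₂ ≤ min (m : ℤ) ((m : ℤ) + i - j)) :
    ∑ i₂ ∈ Finset.Icc (max 0 (i - s₂ - l + m)) (min (m : ℤ) (i - s₂)),
      CGhw l m (i - i₂) i₂ i * CGhw l m (j - i₂) i₂ j *
        CGhw (l - m) m (i - i₂ - s₂) s₂ (i - i₂) *
        CGhw (l - m) m (i - i₂ - s₂) (s₂ + j - i) (j - i₂)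
      = CGhw l m (i - s₂) s₂ i * CGhw l m (i - s₂) (s₂ + j - i) j := by
  have hlm' : ((l - m : ℕ) : ℤ) = (l : ℤ) - m := by
    rw [Nat.cast_sub hlm]
  by_cases hks : 0 ≤ i - s₂ ∧ i - s₂ ≤ (l : ℤ)
  · -- main case
    obtain ⟨hks0, hks1⟩ := hks
    set k := (i - s₂).toNat with hkdef
    have hk : (k : ℤ) = i - s₂ := Int.toNat_of_nonneg hks0
    have hkl : k ≤ l := by omega
    have hC : (0:ℝ) < (l.choose k : ℝ) := by
      exact_mod_cast Nat.choose_pos hkl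
    -- the ratio function
    set r : ℤ → ℝ := fun i₂ =>
      (((l - m).factorial : ℝ) * (m.factorial : ℝ) / (l.factorial : ℝ)) *
        (((i - s₂).toNat.factorial : ℝ) * (((l : ℤ) - (i - s₂)).toNat.factorial : ℝ) /
          ((i₂.toNat.factorial : ℝ) * (((m : ℤ) - i₂).toNat.factorial : ℝ) *
            ((i - i₂ - s₂).toNat.factorial : ℝ) *
            ((((l - m : ℕ) : ℤ) - (i - i₂ - s₂)).toNat.factorial : ℝ))) with hr
    have key : ∀ i₂ ∈ Finset.Icc (max 0 (i - s₂ - l + m)) (min (m : ℤ) (i - s₂)),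
        CGhw l m (i - i₂) i₂ i * CGhw l m (j - i₂) i₂ j *
          CGhw (l - m) m (i - i₂ - s₂) s₂ (i - i₂) *
          CGhw (l - m) m (i - i₂ - s₂) (s₂ + j - i) (j - i₂)
        = (CGhw l m (i - s₂) s₂ i * CGhw l m (i - s₂) (s₂ + j - i) j) * r i₂ := by
      intro i₂ hi₂
      rw [Finset.mem_Icc] at hi₂
      have c1 : i - i₂ + i₂ = i ∧ 0 ≤ i - i₂ ∧ i - i₂ ≤ (l : ℤ) ∧ 0 ≤ i₂ ∧ i₂ ≤ (m : ℤ) := by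
        omega
      have c2 : j - i₂ + i₂ = j ∧ 0 ≤ j - i₂ ∧ j - i₂ ≤ (l : ℤ) ∧ 0 ≤ i₂ ∧ i₂ ≤ (m : ℤ) := by
        omega
      have c3 : i - i₂ - s₂ + s₂ = i - i₂ ∧ 0 ≤ i - i₂ - s₂ ∧ i - i₂ - s₂ ≤ ((l - m : ℕ) : ℤ) ∧
          0 ≤ s₂ ∧ s₂ ≤ (m : ℤ) := by omega
      have c4 : i - i₂ - s₂ + (s₂ + j - i) = j - i₂ ∧ 0 ≤ i - i₂ - s₂ ∧
          i - i₂ - s₂ ≤ ((l - m : ℕ) : ℤ) ∧ 0 ≤ s₂ + j - i ∧ s₂ + j - i ≤ (m : ℤ) := by omega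
      have c5 : i - s₂ + s₂ = i ∧ 0 ≤ i - s₂ ∧ i - s₂ ≤ (l : ℤ) ∧ 0 ≤ s₂ ∧ s₂ ≤ (m : ℤ) := by
        omega
      have c6 : i - s₂ + (s₂ + j - i) = j ∧ 0 ≤ i - s₂ ∧ i - s₂ ≤ (l : ℤ) ∧ 0 ≤ s₂ + j - i ∧
          s₂ + j - i ≤ (m : ℤ) := by omega
      unfold CGhw
      rw [if_pos c1, if_pos c2, if_pos c3, if_pos c4, if_pos c5, if_pos c6, hr]
      simp only [Nat.sub_add_cancel hlm,
        show ((l - m : ℕ) : ℤ) + (m : ℤ) = (l : ℤ) by omega]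
      have fne : ∀ n : ℕ, ((n.factorial : ℝ)) ≠ 0 := fun n =>
        Nat.cast_ne_zero.mpr (Nat.factorial_ne_zero n)
      apply sq_cancel (by positivity) (by positivity)
      simp (disch := positivity) only [mul_pow, Real.sq_sqrt]
      field_simp
    rw [Finset.sum_congr rfl key, ← Finset.mul_sum]
    have step : ∀ i₂ ∈ Finset.Icc (max 0 (i - s₂ - l + m)) (min (m : ℤ) (i - s₂)),
        r i₂ = ((m.choose i₂.toNat * (l - m).choose (k - i₂.toNat) : ℕ) : ℝ) /
          ((l.choose k : ℕ) : ℝ) := by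
      intro i₂ hi₂
      rw [Finset.mem_Icc] at hi₂
      have h1 : i₂.toNat ≤ m := by omega
      have h2 : k - i₂.toNat ≤ l - m := by omega
      have h3 : (i - s₂).toNat = k := rfl
      have h4 : ((l : ℤ) - (i - s₂)).toNat = l - k := by omega
      have h5 : ((m : ℤ) - i₂).toNat = m - i₂.toNat := by omega
      have h6 : (i - i₂ - s₂).toNat = k - i₂.toNat := by omega
      have h7 : ((((l - m : ℕ) : ℤ)) - (i - i₂ - s₂)).toNat = (l - m) - (k - i₂.toNat) := by
        omega
      rw [hr]
      simp only [h3, h4, h5, h6, h7]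
      rw [Nat.cast_mul, Nat.cast_choose ℝ h1, Nat.cast_choose ℝ h2, Nat.cast_choose ℝ hkl]
      have fne : ∀ n : ℕ, ((n.factorial : ℝ)) ≠ 0 := fun n =>
        Nat.cast_ne_zero.mpr (Nat.factorial_ne_zero n)
      field_simp
    rw [Finset.sum_congr rfl step, ← Finset.sum_div]
    have main : ∑ i₂ ∈ Finset.Icc (max 0 (i - s₂ - l + m)) (min (m : ℤ) (i - s₂)),
        ((m.choose i₂.toNat * (l - m).choose (k - i₂.toNat) : ℕ) : ℝ)
        = ((l.choose k : ℕ) : ℝ) := by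
      have hsub : Finset.Icc (max 0 (i - s₂ - l + m)) (min (m : ℤ) (i - s₂)) ⊆
          Finset.Icc (0 : ℤ) (k : ℤ) := by
        intro t ht
        rw [Finset.mem_Icc] at *
        omega
      rw [Finset.sum_subset hsub ?_]
      · have trans : ∑ t ∈ Finset.Icc (0 : ℤ) (k : ℤ),
            ((m.choose t.toNat * (l - m).choose (k - t.toNat) : ℕ) : ℝ)
            = ∑ n ∈ Finset.range (k + 1),
              ((m.choose n * (l - m).choose (k - n) : ℕ) : ℝ) := by
          refine Finset.sum_nbij' (fun t => t.toNat) (fun n => (n : ℤ)) ?_ ?_ ?_ ?_ ?_ <;>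
            intro a ha <;> beta_reduce <;>
            simp only [Finset.mem_Icc, Finset.mem_range] at * <;> first | rfl | omega
        rw [trans, ← Nat.cast_sum]
        congr 1
        rw [vdm, Nat.add_sub_cancel' hlm]
      · intro t ht hnt
        rw [Finset.mem_Icc] at ht
        rw [Finset.mem_Icc] at hnt
        push_neg at hnt
        have : m.choose t.toNat * (l - m).choose (k - t.toNat) = 0 := by
          rcases le_or_gt t (min (m : ℤ) (i - s₂)) with h | h
          · have hlt : t < i - s₂ - l + m := by omega
            have : l - m < k - t.toNat := by omega
            rw [Nat.choose_eq_zero_of_lt this, mul_zero]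
          · have : m < t.toNat := by omega
            rw [Nat.choose_eq_zero_of_lt this, zero_mul]
        rw [this, Nat.cast_zero]
    rw [main, div_self (ne_of_gt hC), mul_one]
  · -- degenerate case: empty sum and zero RHS
    have hempty : Finset.Icc (max 0 (i - s₂ - l + m)) (min (m : ℤ) (i - s₂)) = ∅ := by
      apply Finset.Icc_eq_empty
      omega
    have hz : CGhw l m (i - s₂) s₂ i = 0 := by
      unfold CGhw
      rw [if_neg]
      omega
    rw [hempty, Finset.sum_empty, hz, zero_mul]
end
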